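/- Let n, k, y be integers with 1 ≤ k ≤ n, y even, 2 ≤ y, k ≤ y ≤ n, and (log 2)/2 ≤ yk/n < 1 (log denoting natural logarithm). Then the probability that a lazy step selects between 1 and min{y/2, k} (inclusive) of the y mismatched coordinates is at least (√2 − 1)/(4·√2); that is, ∑_{i : 1 ≤ i ≤ min(y/2, k)} binom(y,i)·binom(n−y, k−i) / (2·binom(n,k)) ≥ (√2 − 1)/(4·√2). -/

import Mathlib

open Finset

lemma aux_mono (m : ℕ) : ∀ b a : ℕ, a ≤ b → 2*b ≤ m + 1 → m.choose a ≤ m.choose b := by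
  intro b
  induction b with
  | zero => intro a ha _; simp [Nat.le_zero.mp ha]
  | succ b ih =>
    intro a ha hb
    rcases Nat.eq_or_lt_of_le ha with rfl | h
    · exact le_refl _
    · have h1 : a ≤ b := Nat.lt_succ_iff.mp h
      refine (ih a h1 (by omega)).trans ?_
      rcases Nat.lt_or_ge (2*(b+1)) (m+1) with hlt | hge
      · exact Nat.choose_le_succ_of_lt_half_left (by omega)
      · have hm : m = 2*b+1 := by omega
        have : m.choose (m - (b+1)) = m.choose (b+1) := Nat.choose_symm (by omega)
        rw [show m - (b+1) = b by omega] at this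
        exact this.le

lemma aux_ratio (n y k : ℕ) (hyn : y ≤ n) :
    (n-y).choose k * n^k ≤ n.choose k * (n-y)^k := by
  have key : (n-y).descFactorial k * n^k ≤ n.descFactorial k * (n-y)^k := by
    have e1 : n^k = ∏ _i ∈ Finset.range k, n := by
      rw [Finset.prod_const, Finset.card_range]
    have e2 : (n-y)^k = ∏ _i ∈ Finset.range k, (n-y) := by
      rw [Finset.prod_const, Finset.card_range]
    rw [Nat.descFactorial_eq_prod_range, Nat.descFactorial_eq_prod_range, e1, e2,
      ← Finset.prod_mul_distrib, ← Finset.prod_mul_distrib]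
    refine Finset.prod_le_prod' fun i _ => ?_
    rcases Nat.lt_or_ge i (n - y) with hi | hi
    · zify [hyn, (by omega : y ≤ n - i), (by omega : i ≤ n - y), (by omega : i ≤ n)]
      nlinarith [Int.natCast_nonneg i, Int.natCast_nonneg y]
    · rw [Nat.sub_eq_zero_of_le hi, Nat.zero_mul]
      exact Nat.zero_le _
  rw [Nat.descFactorial_eq_factorial_mul_choose, Nat.descFactorial_eq_factorial_mul_choose,
    Nat.mul_assoc, Nat.mul_assoc] at key
  exact Nat.le_of_mul_le_mul_left key (Nat.factorial_pos k)

/-- `pcoup n k y i` is the probability that a lazy step of the coupling is active and selects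
exactly `i` of the `y` mismatched coordinates among the `k` coordinates picked:
`binom(y,i)·binom(n−y,k−i) / (2·binom(n,k))`. -/
noncomputable def pcoup (n k y : ℕ) (i : ℕ) : ℝ :=
  ((y.choose i * (n - y).choose (k - i) : ℕ) : ℝ) / (2 * n.choose k)

theorem stmt_8 (n k y : ℕ) (hk1 : 1 ≤ k) (hkn : k ≤ n) (hye : Even y) (hy2 : 2 ≤ y)
    (hky : k ≤ y) (hyn : y ≤ n) (h1 : Real.log 2 / 2 ≤ (y : ℝ) * k / n)
    (h2 : (y : ℝ) * k / n < 1) :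
    (Real.sqrt 2 - 1) / (4 * Real.sqrt 2) ≤
      ∑ i ∈ Finset.Icc 1 (min (y / 2) k), pcoup n k y i := by
  obtain ⟨t, rfl⟩ := hye
  have hy2t : t + t = 2 * t := by ring
  have hn0 : 0 < n := by omega
  have hnR : (0:ℝ) < n := by exact_mod_cast hn0
  have hykn : (t+t) * k < n := by
    have : ((t+t:ℕ):ℝ) * k < n := by
      rw [div_lt_one hnR] at h2; exact_mod_cast h2
    exact_mod_cast (by exact_mod_cast this : (((t+t)*k:ℕ):ℝ) < (n:ℝ))
  set m := min ((t+t) / 2) k with hm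
  have hmval : (t+t)/2 = t := by omega
  -- the nat-valued weights
  set f : ℕ → ℕ := fun i => (t+t).choose i * (n - (t+t)).choose (k - i) with hf
  -- Vandermonde
  have hV : ∑ i ∈ Finset.range (k+1), f i = n.choose k := by
    have hv := Nat.add_choose_eq (t+t) (n-(t+t)) k
    rw [Nat.add_sub_cancel' hyn] at hv
    rw [hv, Finset.Nat.sum_antidiagonal_eq_sum_range_succ
      (fun a b => (t+t).choose a * (n-(t+t)).choose b) k]
  have hsplit0 : Finset.range (k+1) = insert 0 (Finset.Icc 1 k) := by
    ext i; simp [Finset.mem_Icc, Finset.mem_range]; omega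
  have hS0 : n.choose k = (n-(t+t)).choose k + ∑ i ∈ Finset.Icc 1 k, f i := by
    rw [← hV, hsplit0, Finset.sum_insert (by simp)]
    simp [hf]
  have hsplit1 : Finset.Icc 1 k = Finset.Icc 1 m ∪ Finset.Icc (m+1) k := by
    ext i; simp [Finset.mem_Icc, Finset.mem_union]; omega
  have hdisj : Disjoint (Finset.Icc 1 m) (Finset.Icc (m+1) k) := by
    rw [Finset.disjoint_left]; intro i hi hi'
    simp only [Finset.mem_Icc] at hi hi'; omega
  -- tail bound
  have htail : ∑ i ∈ Finset.Icc (m+1) k, f i ≤ ∑ i ∈ Finset.Icc 1 m, f i := by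
    rcases le_or_gt k t with hkt | hkt
    · have : m = k := by omega
      rw [this, Finset.Icc_eq_empty (by omega)]; simp
    · -- m = t, k > t, so k ≥ t+1 ≥ 2
      have hmt : m = t := by omega
      have hk2 : 2 ≤ k := by omega
      have hnyk : 2 * (k-1) ≤ (n - (t+t)) + 1 := by
        have h1' : 2 * (k-1) ≤ (t+t) * (k-1) := Nat.mul_le_mul_right _ (by omega)
        have h2' : (t+t) * (k-1) + (t+t) = (t+t) * k := by
          rw [← Nat.mul_succ]; congr 1; omega
        omega
      calc ∑ i ∈ Finset.Icc (m+1) k, f i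
          ≤ ∑ i ∈ Finset.Icc (m+1) k, f ((t+t)+1-i) := by
            refine Finset.sum_le_sum fun i hi => ?_
            simp only [Finset.mem_Icc, hmt] at hi
            set j := (t+t)+1-i with hj
            have hij : 1 ≤ j ∧ j ≤ t ∧ j ≤ i ∧ i ≤ t+t := by omega
            have e1 : (t+t).choose i = (t+t).choose (j-1) := by
              rw [← Nat.choose_symm (by omega : i ≤ t+t)]
              congr 1; omega
            have e2 : (t+t).choose (j-1) ≤ (t+t).choose j :=
              aux_mono _ j (j-1) (by omega) (by omega)
            have e3 : (n-(t+t)).choose (k-i) ≤ (n-(t+t)).choose (k-j) :=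
              aux_mono _ (k-j) (k-i) (by omega) (by omega)
            rw [hf]; dsimp only
            rw [e1]
            exact Nat.mul_le_mul e2 e3
        _ = ∑ j ∈ (Finset.Icc (m+1) k).image (fun i => (t+t)+1-i), f j := by
            rw [Finset.sum_image]
            intro a ha b hb hab
            simp only [Finset.coe_Icc, Set.mem_Icc, Finset.mem_Icc, hmt] at ha hb hab
            omega
        _ ≤ ∑ i ∈ Finset.Icc 1 m, f i := by
            refine Finset.sum_le_sum_of_subset ?_
            intro j hj
            simp only [Finset.mem_image, Finset.mem_Icc, hmt] at hj ⊢
            obtain ⟨i, hi, rfl⟩ := hj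
            omega
  set S := ∑ i ∈ Finset.Icc 1 m, f i with hSdef
  have hkey : n.choose k ≤ (n-(t+t)).choose k + 2 * S := by
    rw [hS0, hsplit1, Finset.sum_union hdisj]; omega
  -- move to the reals
  set C := (n.choose k : ℝ) with hC
  set q := ((n-(t+t)).choose k : ℝ) with hq
  have hCpos : 0 < C := by rw [hC]; exact_mod_cast Nat.choose_pos hkn
  have hsqrt2 : Real.sqrt 2 = Real.exp (Real.log 2 / 2) := by
    have hh : Real.exp (Real.log 2 / 2) ^ 2 = 2 := by
      rw [sq, ← Real.exp_add, show Real.log 2 / 2 + Real.log 2 / 2 = Real.log 2 by ring,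
        Real.exp_log]; norm_num
    rw [← Real.sqrt_sq (Real.exp_pos (Real.log 2 / 2)).le, hh]
  have hs2pos : 0 < Real.sqrt 2 := by rw [hsqrt2]; exact Real.exp_pos _
  -- q ≤ C / sqrt 2, in the form q * sqrt 2 ≤ C
  have hqC : q * Real.sqrt 2 ≤ C := by
    have hr := aux_ratio n (t+t) k hyn
    have hrR : q * (n:ℝ)^k ≤ C * ((n:ℝ) - (t+t))^k := by
      have := (Nat.cast_le (α := ℝ)).mpr hr
      push_cast [Nat.cast_sub hyn] at this
      convert this using 2 <;> push_cast <;> ring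
    have hbase : (n:ℝ) - (t+t) = (1 - ((t+t):ℝ)/n) * n := by field_simp
    rw [hbase, mul_pow, ← mul_assoc] at hrR
    have hq1 : q ≤ C * (1 - ((t+t):ℝ)/n)^k := by
      have hnk : (0:ℝ) < (n:ℝ)^k := by positivity
      exact le_of_mul_le_mul_right hrR hnk
    have hx0 : (0:ℝ) ≤ 1 - ((t+t):ℝ)/n := by
      rw [sub_nonneg, div_le_one hnR]; exact_mod_cast hyn
    have hexp1 : (1 - ((t+t):ℝ)/n) ≤ Real.exp (-(((t+t):ℝ)/n)) := by
      have := Real.add_one_le_exp (-(((t+t):ℝ)/n)); linarith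
    have hexp2 : (1 - ((t+t):ℝ)/n)^k ≤ Real.exp (-(((t+t):ℝ)/n))^k :=
      pow_le_pow_left₀ hx0 hexp1 k
    have hexp3 : Real.exp (-(((t+t):ℝ)/n))^k = Real.exp (-(((t+t):ℝ) * k / n)) := by
      rw [← Real.exp_nat_mul]; congr 1; field_simp
    have hexp4 : Real.exp (-(((t+t):ℝ) * k / n)) ≤ Real.exp (-(Real.log 2 / 2)) := by
      apply Real.exp_le_exp.mpr
      push_cast at h1 ⊢
      linarith
    have hfin : q ≤ C * (Real.sqrt 2)⁻¹ := by
      rw [hsqrt2, ← Real.exp_neg]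
      calc q ≤ C * (1 - ((t+t):ℝ)/n)^k := hq1
        _ ≤ C * Real.exp (-(Real.log 2 / 2)) := by
            refine mul_le_mul_of_nonneg_left ?_ hCpos.le
            calc (1 - ((t+t):ℝ)/n)^k ≤ Real.exp (-(((t+t):ℝ)/n))^k := hexp2
              _ = Real.exp (-(((t+t):ℝ) * k / n)) := hexp3
              _ ≤ Real.exp (-(Real.log 2 / 2)) := hexp4
    calc q * Real.sqrt 2 ≤ (C * (Real.sqrt 2)⁻¹) * Real.sqrt 2 :=
          mul_le_mul_of_nonneg_right hfin hs2pos.le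
      _ = C := by field_simp
  -- express the goal sum
  have hsum : ∑ i ∈ Finset.Icc 1 m, pcoup n k (t+t) i = (S:ℝ) / (2 * C) := by
    rw [hSdef]
    push_cast
    rw [Finset.sum_div]
    rfl
  rw [hsum]
  have hkeyR : C ≤ q + 2 * (S:ℝ) := by rw [hC, hq]; exact_mod_cast hkey
  have hSnn : (0:ℝ) ≤ (S:ℝ) := Nat.cast_nonneg _
  rw [div_le_div_iff₀ (by positivity) (by positivity)]
  have hss : Real.sqrt 2 * Real.sqrt 2 = 2 := Real.mul_self_sqrt (by norm_num)
  nlinarith [mul_le_mul_of_nonneg_left hkeyR (by positivity : (0:ℝ) ≤ 2 * Real.sqrt 2), hqC,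
    hCpos, hs2pos]
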